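/- Let μ be a Borel probability measure on ℝ^d with finite first moment and support κ. If 0 lies in the relative interior of the convex hull of κ, then for every nonzero h in the linear span of κ one has ∫ (h,x)⁻ μ(dx) > 0, and consequently the set T = {h ∈ span(κ) : ∫ (h,x)⁻ μ(dx) ≤ 1} is compact. -/

import Mathlib

open MeasureTheory

/-- Support of a Borel measure on a metric space. -/
def mSupport {E : Type*} [MeasurableSpace E] [PseudoMetricSpace E] (μ : Measure E) : Set E :=
  {x | ∀ ε > 0, 0 < μ (Metric.ball x ε)}

/-- `ν` is a regular conditional distribution of `ξ` given the sub-σ-algebra `H`. -/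
def IsRCD {Ω E : Type*} [MeasurableSpace Ω] [MeasurableSpace E]
    (H : MeasurableSpace Ω) (P : Measure Ω) (ξ : Ω → E) (ν : Ω → Measure E) : Prop :=
  (∀ ω, IsProbabilityMeasure (ν ω)) ∧
  (∀ B : Set E, MeasurableSet B → Measurable[H] fun ω => ν ω B) ∧
  (∀ B : Set E, MeasurableSet B →
    (fun ω => (ν ω B).toReal) =ᵐ[P] condExp H P (Set.indicator (ξ ⁻¹' B) fun _ => (1 : ℝ)))
theorem stmt_5 (d : ℕ) (μ : Measure (EuclideanSpace ℝ (Fin d))) [IsProbabilityMeasure μ]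
    (hmom : Integrable (fun x => ‖x‖) μ)
    (h0 : (0 : EuclideanSpace ℝ (Fin d)) ∈
      intrinsicInterior ℝ (convexHull ℝ (mSupport μ))) :
    (∀ h : EuclideanSpace ℝ (Fin d), h ∈ Submodule.span ℝ (mSupport μ) → h ≠ 0 →
        0 < ∫ x, max (-(inner ℝ h x : ℝ)) 0 ∂μ) ∧
      IsCompact {h : EuclideanSpace ℝ (Fin d) |
        h ∈ Submodule.span ℝ (mSupport μ) ∧ (∫ x, max (-(inner ℝ h x : ℝ)) 0 ∂μ) ≤ 1} := by
  classical
  set E := EuclideanSpace ℝ (Fin d)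
  set κ : Set E := mSupport μ with hκdef
  set F : E → ℝ := fun h => ∫ x, max (-(inner ℝ h x : ℝ)) 0 ∂μ with hFdef
  have hFeq : ∀ h : E, (∫ x, max (-(inner ℝ h x : ℝ)) 0 ∂μ) = F h := fun _ => rfl
  -- continuity of inner products
  have hcin : ∀ h : E, Continuous fun x : E => (inner ℝ h x : ℝ) := fun h =>
    continuous_const.inner continuous_id
  -- integrability
  have hInt : ∀ h : E, Integrable (fun x => max (-(inner ℝ h x : ℝ)) 0) μ := by
    intro h
    refine (hmom.const_mul ‖h‖).mono (((hcin h).neg.max continuous_const).aestronglyMeasurable) ?_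
    filter_upwards with x
    rw [Real.norm_eq_abs, abs_of_nonneg (le_max_right _ _)]
    have h1 : -(inner ℝ h x : ℝ) ≤ |(inner ℝ h x : ℝ)| := neg_le_abs _
    have h2 : |(inner ℝ h x : ℝ)| ≤ ‖h‖ * ‖x‖ := abs_real_inner_le_norm h x
    have h3 : (0:ℝ) ≤ ‖h‖ * ‖x‖ := by positivity
    calc max (-(inner ℝ h x : ℝ)) 0 ≤ ‖h‖ * ‖x‖ := max_le (h1.trans h2) h3
      _ ≤ ‖‖h‖ * ‖x‖‖ := le_abs_self _
  have hF0 : ∀ h : E, 0 ≤ F h := fun h => integral_nonneg fun x => le_max_right _ _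
  -- Lipschitz estimate
  set M : ℝ := ∫ x, ‖x‖ ∂μ with hMdef
  have hM0 : 0 ≤ M := integral_nonneg fun x => norm_nonneg x
  have hLip : ∀ h₁ h₂ : E, |F h₁ - F h₂| ≤ M * ‖h₁ - h₂‖ := by
    intro h₁ h₂
    have hsub : F h₁ - F h₂
        = ∫ x, (max (-(inner ℝ h₁ x : ℝ)) 0 - max (-(inner ℝ h₂ x : ℝ)) 0) ∂μ :=
      (integral_sub (hInt h₁) (hInt h₂)).symm
    rw [hsub]
    have hptw : ∀ x : E, |max (-(inner ℝ h₁ x : ℝ)) 0 - max (-(inner ℝ h₂ x : ℝ)) 0|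
        ≤ ‖h₁ - h₂‖ * ‖x‖ := by
      intro x
      have := abs_max_sub_max_le_abs (-(inner ℝ h₁ x : ℝ)) (-(inner ℝ h₂ x : ℝ)) 0
      have heq : |(-(inner ℝ h₁ x : ℝ)) - (-(inner ℝ h₂ x : ℝ))| = |(inner ℝ (h₁ - h₂) x : ℝ)| := by
        rw [inner_sub_left]
        ring_nf
        rw [abs_sub_comm]
        ring_nf
      calc |max (-(inner ℝ h₁ x : ℝ)) 0 - max (-(inner ℝ h₂ x : ℝ)) 0|
          ≤ |(-(inner ℝ h₁ x : ℝ)) - (-(inner ℝ h₂ x : ℝ))| := this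
        _ = |(inner ℝ (h₁ - h₂) x : ℝ)| := heq
        _ ≤ ‖h₁ - h₂‖ * ‖x‖ := abs_real_inner_le_norm _ _
    calc |∫ x, (max (-(inner ℝ h₁ x : ℝ)) 0 - max (-(inner ℝ h₂ x : ℝ)) 0) ∂μ|
        ≤ ∫ x, |max (-(inner ℝ h₁ x : ℝ)) 0 - max (-(inner ℝ h₂ x : ℝ)) 0| ∂μ :=
by
          simpa [Real.norm_eq_abs] using
            norm_integral_le_integral_norm (μ := μ)
              (fun x => max (-(inner ℝ h₁ x : ℝ)) 0 - max (-(inner ℝ h₂ x : ℝ)) 0)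
      _ ≤ ∫ x, ‖h₁ - h₂‖ * ‖x‖ ∂μ := by
          refine integral_mono ((hInt h₁).sub (hInt h₂)).abs (hmom.const_mul _) ?_
          exact hptw
      _ = ‖h₁ - h₂‖ * M := by rw [integral_const_mul]
      _ = M * ‖h₁ - h₂‖ := mul_comm _ _
  have hFc : Continuous F := by
    refine (LipschitzWith.of_dist_le_mul (K := M.toNNReal) ?_).continuous
    intro a b
    rw [Real.dist_eq, dist_eq_norm, Real.coe_toNNReal _ hM0]
    exact hLip a b
  -- positive homogeneity
  have hFhom : ∀ (t : ℝ), 0 ≤ t → ∀ h : E, F (t • h) = t * F h := by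
    intro t ht h
    have : ∀ x : E, max (-(inner ℝ (t • h) x : ℝ)) 0 = t * max (-(inner ℝ h x : ℝ)) 0 := by
      intro x
      rw [real_inner_smul_left, mul_max_of_nonneg _ _ ht, mul_zero, mul_neg]
    simp only [hFdef, this, integral_const_mul]
  -- key positivity
  have key : ∀ h : E, h ∈ Submodule.span ℝ κ → h ≠ 0 → 0 < F h := by
    intro h hspan hne
    rcases (hF0 h).lt_or_eq with hlt | heq
    · exact hlt
    exfalso
    have hae : (fun x => max (-(inner ℝ h x : ℝ)) 0) =ᵐ[μ] 0 :=
      (integral_eq_zero_iff_of_nonneg (fun x => le_max_right _ _) (hInt h)).mp heq.symm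
    have hnull : μ {y : E | max (-(inner ℝ h y : ℝ)) 0 ≠ 0} = 0 := by
      have := hae
      rw [Filter.EventuallyEq, ae_iff] at this
      simpa using this
    have hκpos : ∀ x ∈ κ, (0:ℝ) ≤ inner ℝ h x := by
      intro x hx
      by_contra hneg
      push_neg at hneg
      have hU : IsOpen {y : E | (inner ℝ h y : ℝ) < 0} := isOpen_lt (hcin h) continuous_const
      obtain ⟨ε, hε, hball⟩ := Metric.isOpen_iff.mp hU x hneg
      have hμball : 0 < μ (Metric.ball x ε) := hx ε hε
      have hsub : Metric.ball x ε ⊆ {y : E | max (-(inner ℝ h y : ℝ)) 0 ≠ 0} := by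
        intro y hy
        have hy' : (inner ℝ h y : ℝ) < 0 := hball hy
        have : 0 < max (-(inner ℝ h y : ℝ)) 0 := lt_max_of_lt_left (by linarith)
        exact ne_of_gt this
      exact absurd (measure_mono_null hsub hnull) hμball.ne'
    -- conv κ lies in the halfspace
    set C : Set E := convexHull ℝ κ with hCdef
    have hconv : C ⊆ {x : E | (0:ℝ) ≤ inner ℝ h x} := by
      refine convexHull_min hκpos ?_
      exact convex_halfSpace_ge (innerSL ℝ h).toLinearMap.isLinear 0
    have h0C : (0 : E) ∈ C := intrinsicInterior_subset h0
    -- span κ ≤ vectorSpan of C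
    have hdir : Submodule.span ℝ κ ≤ vectorSpan ℝ C := by
      refine Submodule.span_le.mpr fun x hx => ?_
      have := vsub_mem_vectorSpan ℝ (subset_convexHull ℝ κ hx) h0C
      simpa using this
    -- find small ball in the affine span
    obtain ⟨y, hy, hy0⟩ := h0
    rw [mem_interior_iff_mem_nhds, Metric.mem_nhds_iff] at hy
    obtain ⟨ε, hε, hball⟩ := hy
    have hnorm : 0 < ‖h‖ := norm_pos_iff.mpr hne
    set t : ℝ := ε / (2 * ‖h‖) with htdef
    have ht : 0 < t := by positivity
    set v : E := (-t) • h with hvdef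
    have hvmem : v ∈ affineSpan ℝ C := by
      have hv' : v ∈ vectorSpan ℝ C :=
        Submodule.smul_mem _ _ (hdir hspan)
      have := AffineSubspace.vadd_mem_of_mem_direction
        (by rw [direction_affineSpan]; exact hv') (mem_affineSpan ℝ h0C)
      simpa using this
    set p : affineSpan ℝ C := ⟨v, hvmem⟩ with hpdef
    have hdist : dist p y < ε := by
      have : dist p y = dist v (0 : E) := by
        rw [Subtype.dist_eq, hy0]
      rw [this, dist_zero_right, hvdef, norm_smul]
      simp only [norm_neg, Real.norm_eq_abs, abs_of_pos ht]
      rw [htdef]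
      rw [div_mul_eq_mul_div, mul_comm]
      rw [div_lt_iff₀ (by positivity)]
      nlinarith
    have hpC : v ∈ C := hball (Metric.mem_ball.mpr hdist)
    have := hconv hpC
    simp only [Set.mem_setOf_eq, hvdef] at this
    rw [real_inner_smul_right, real_inner_self_eq_norm_sq] at this
    nlinarith [mul_pos ht (pow_pos hnorm 2)]
  refine ⟨fun h hs hn => by rw [hFeq]; exact key h hs hn, ?_⟩
  -- compactness
  have hclosed : IsClosed {h : E | h ∈ Submodule.span ℝ κ ∧ F h ≤ 1} := by
    have h1 : IsClosed {h : E | h ∈ Submodule.span ℝ κ} :=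
      (Submodule.span ℝ κ).closed_of_finiteDimensional
    have h2 : IsClosed {h : E | F h ≤ 1} := isClosed_le hFc continuous_const
    exact h1.inter h2
  by_cases hsp : ∃ h₀ : E, h₀ ∈ Submodule.span ℝ κ ∧ h₀ ≠ 0
  · obtain ⟨h₀, hh₀, hh₀ne⟩ := hsp
    set S1 : Set E := Metric.sphere 0 1 ∩ {h | h ∈ Submodule.span ℝ κ} with hS1def
    have hS1comp : IsCompact S1 :=
      (isCompact_sphere (0:E) 1).inter_right (Submodule.span ℝ κ).closed_of_finiteDimensional
    have hS1ne : S1.Nonempty := by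
      refine ⟨‖h₀‖⁻¹ • h₀, ?_, ?_⟩
      · simp [norm_smul, norm_pos_iff.mpr hh₀ne,
          inv_mul_cancel₀ (norm_ne_zero_iff.mpr hh₀ne)]
      · exact Submodule.smul_mem _ _ hh₀
    obtain ⟨z, hzS, hzmin⟩ := hS1comp.exists_isMinOn hS1ne hFc.continuousOn
    have hzne : z ≠ 0 := by
      intro hz
      rw [hz] at hzS
      have := hzS.1
      simp at this
    have hc : 0 < F z := key z hzS.2 hzne
    refine (isCompact_closedBall (0:E) (1 / F z)).of_isClosed_subset hclosed ?_
    intro h hh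
    obtain ⟨hhs, hhF⟩ := hh
    simp only [Metric.mem_closedBall, dist_zero_right]
    rcases eq_or_ne h 0 with rfl | hne
    · simp; positivity
    have hnorm : 0 < ‖h‖ := norm_pos_iff.mpr hne
    have hz' : (‖h‖⁻¹ • h) ∈ S1 := by
      constructor
      · simp [norm_smul, inv_mul_cancel₀ hnorm.ne']
      · exact Submodule.smul_mem _ _ hhs
    have hmin : F z ≤ F (‖h‖⁻¹ • h) := hzmin hz'
    have hhom : F (‖h‖⁻¹ • h) = ‖h‖⁻¹ * F h := hFhom _ (by positivity) h
    rw [hhom] at hmin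
    rw [le_div_iff₀ hc]
    calc ‖h‖ * F z ≤ ‖h‖ * (‖h‖⁻¹ * F h) := by
          exact mul_le_mul_of_nonneg_left hmin hnorm.le
      _ = F h := by field_simp
      _ ≤ 1 := hhF
  · push_neg at hsp
    have : {h : E | h ∈ Submodule.span ℝ κ ∧ F h ≤ 1} = {0} := by
      ext h
      simp only [Set.mem_setOf_eq, Set.mem_singleton_iff]
      constructor
      · rintro ⟨hs, -⟩
        by_contra hne
        exact hne (hsp h hs)
      · rintro rfl
        refine ⟨Submodule.zero_mem _, ?_⟩
        have : F (0:E) = 0 := by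
          simp only [hFdef]
          have : ∀ x : E, max (-(inner ℝ (0:E) x : ℝ)) 0 = 0 := by
            intro x; simp
          simp [this]
        rw [this]; norm_num
    rw [this]
    exact isCompact_singleton
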